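/- For every even natural number n, the sum b(0)+b(1)+⋯+b(n) of the first n+1 evil numbers equals n² + 3n/2 + t(n), where t(n) is the Thue–Morse sequence; for odd n it equals n² + (3n+1)/2. -/

import Mathlib

/-- Sum of base-`d` digits of `n`. -/
def sdig (d n : ℕ) : ℕ := (Nat.digits d n).sum

/-- `t_d(n)`: base-`d` digit sum of `n`, reduced mod `d`. -/
def td (d n : ℕ) : ℕ := sdig d n % d

/-- `a_{j,d}(n)`: n-th natural (0-indexed, increasing) with base-`d` digit sum ≡ j mod d. -/
noncomputable def agen (d j n : ℕ) : ℕ := Nat.nth (fun k => sdig d k % d = j) n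

/-- n-th odious number (binary digit sum odd), 0-indexed increasing. -/
noncomputable def odious (n : ℕ) : ℕ := Nat.nth (fun k => (Nat.digits 2 k).sum % 2 = 1) n

/-- n-th evil number (binary digit sum even), 0-indexed increasing. -/
noncomputable def evil (n : ℕ) : ℕ := Nat.nth (fun k => (Nat.digits 2 k).sum % 2 = 0) n

/-- Thue–Morse sequence: parity of the binary digit sum. -/
def tm (n : ℕ) : ℕ := (Nat.digits 2 n).sum % 2

lemma tm_lt_two (n : ℕ) : tm n < 2 := Nat.mod_lt _ (by norm_num)

lemma tm_two_mul (n : ℕ) : tm (2 * n) = tm n := by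
  rcases Nat.eq_zero_or_pos n with h | h
  · simp [h, tm]
  · unfold tm
    rw [Nat.digits_def' (by norm_num) (by omega)]
    simp [Nat.mul_div_cancel_left _ (show 0 < 2 by norm_num), Nat.mul_mod_right]

lemma tm_two_mul_add_one (n : ℕ) : tm (2 * n + 1) = (tm n + 1) % 2 := by
  unfold tm
  rw [Nat.digits_def' (by norm_num) (by omega)]
  have h1 : (2 * n + 1) % 2 = 1 := by omega
  have h2 : (2 * n + 1) / 2 = n := by omega
  rw [h1, h2]
  simp [Nat.add_mod, Nat.add_comm]

lemma count_two_mul (n : ℕ) :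
    Nat.count (fun k => (Nat.digits 2 k).sum % 2 = 0) (2 * n) = n := by
  induction n with
  | zero => simp
  | succ m ih =>
    have h1 : 2 * (m + 1) = (2 * m + 1) + 1 := by ring
    rw [h1, Nat.count_succ, Nat.count_succ, ih]
    have he : (Nat.digits 2 (2 * m)).sum % 2 = tm m := tm_two_mul m
    have ho : (Nat.digits 2 (2 * m + 1)).sum % 2 = (tm m + 1) % 2 := tm_two_mul_add_one m
    have := tm_lt_two m
    rcases (by omega : tm m = 0 ∨ tm m = 1) with h | h <;>
      simp only [he, ho, h] <;> norm_num

lemma evil_eq (n : ℕ) : evil n = 2 * n + tm n := by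
  have hp : (Nat.digits 2 (2 * n + tm n)).sum % 2 = 0 := by
    have := tm_lt_two n
    rcases (by omega : tm n = 0 ∨ tm n = 1) with h | h
    · rw [h]; have h3 : (Nat.digits 2 (2 * n)).sum % 2 = tm n := tm_two_mul n; simpa [h] using h3
    · rw [h]
      have h2 := tm_two_mul_add_one n
      rw [h] at h2
      norm_num at h2
      exact h2
  have hc : Nat.count (fun k => (Nat.digits 2 k).sum % 2 = 0) (2 * n + tm n) = n := by
    have := tm_lt_two n
    rcases (by omega : tm n = 0 ∨ tm n = 1) with h | h
    · rw [h]; simpa using count_two_mul n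
    · rw [h, Nat.count_succ, count_two_mul]
      have he : (Nat.digits 2 (2 * n)).sum % 2 = tm n := tm_two_mul n
      simp [he, h]
  have := Nat.nth_count (p := fun k => (Nat.digits 2 k).sum % 2 = 0) hp
  rw [hc] at this
  exact this

lemma sum_tm_two_mul (q : ℕ) : ∑ k ∈ Finset.range (2 * q), tm k = q := by
  induction q with
  | zero => simp
  | succ m ih =>
    have h1 : 2 * (m + 1) = (2 * m + 1) + 1 := by ring
    rw [h1, Finset.sum_range_succ, Finset.sum_range_succ, ih,
      tm_two_mul, tm_two_mul_add_one]
    have := tm_lt_two m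
    omega

theorem stmt10 (n : ℕ) :
    (Even n → (2 * ∑ k ∈ Finset.range (n + 1), evil k : ℤ) = 2 * n ^ 2 + 3 * n + 2 * tm n) ∧
    (Odd n → (2 * ∑ k ∈ Finset.range (n + 1), evil k : ℤ) = 2 * n ^ 2 + 3 * n + 1) := by
  have hkey : ∀ m : ℕ, (∑ k ∈ Finset.range (m + 1), evil k)
      = m * (m + 1) + ∑ k ∈ Finset.range (m + 1), tm k := by
    intro m
    calc ∑ k ∈ Finset.range (m + 1), evil k
        = ∑ k ∈ Finset.range (m + 1), (2 * k + tm k) := by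
          exact Finset.sum_congr rfl (fun k _ => evil_eq k)
      _ = 2 * ∑ k ∈ Finset.range (m + 1), k + ∑ k ∈ Finset.range (m + 1), tm k := by
          rw [Finset.sum_add_distrib, Finset.mul_sum]
      _ = m * (m + 1) + ∑ k ∈ Finset.range (m + 1), tm k := by
          have h : 2 * ∑ k ∈ Finset.range (m + 1), k = m * (m + 1) := by
            rw [mul_comm, Finset.sum_range_id_mul_two, Nat.add_sub_cancel, mul_comm]
          rw [h]
  constructor
  · rintro ⟨q, hq⟩
    have hn : n = 2 * q := by omega
    subst hn
    have hs : ∑ k ∈ Finset.range (2 * q + 1), tm k = q + tm (2 * q) := by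
      rw [Finset.sum_range_succ, sum_tm_two_mul]
    rw [hkey, hs]
    push_cast
    ring
  · rintro ⟨q, hq⟩
    have hn : n = 2 * q + 1 := by omega
    subst hn
    have hs : ∑ k ∈ Finset.range (2 * q + 1 + 1), tm k = q + 1 := by
      have : 2 * q + 1 + 1 = 2 * (q + 1) := by ring
      rw [this, sum_tm_two_mul]
    rw [hkey, hs]
    have ht : (tm (2 * q + 1) : ℤ) = (1 : ℤ) - tm q := by
      have := tm_two_mul_add_one q
      have h2 := tm_lt_two q
      rcases (by omega : tm q = 0 ∨ tm q = 1) with h | h <;> simp [this, h]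
    push_cast
    ring
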